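/- Let H be a positive definite d×d real matrix with orthonormal eigenbasis v_1,...,v_d, let w, ℓ ∈ ℝ^d, and let s be sampled uniformly from the set {σ v_i : σ ∈ {-1,1}, i ∈ [d]}. Define w̃ = w + H^{-1/2} s and ℓ̃ = d · H^{1/2} s · ⟨w̃, ℓ⟩. Then E[ℓ̃] = ℓ. -/
import Mathlib


open Matrix Finset

/-- Unbiasedness of the perturbation-based loss estimator: expectation over the
uniform choice of `s` among the `2d` signed eigenvectors of `H` equals `ℓ`. -/
theorem stmt0 {d : ℕ} (hd : 0 < d)
    (H Hsqrt Hinvsqrt : Matrix (Fin d) (Fin d) ℝ)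
    (v : Fin d → (Fin d → ℝ)) (lam : Fin d → ℝ)
    (hlam : ∀ i, 0 < lam i)
    (horth : ∀ i j, v i ⬝ᵥ v j = if i = j then (1 : ℝ) else 0)
    (hH : ∀ i, H.mulVec (v i) = lam i • v i)
    (hHsqrt : ∀ i, Hsqrt.mulVec (v i) = Real.sqrt (lam i) • v i)
    (hHinvsqrt : ∀ i, Hinvsqrt.mulVec (v i) = (Real.sqrt (lam i))⁻¹ • v i)
    (w ℓ : Fin d → ℝ) :
    (1 / (2 * (d : ℝ))) •
      (∑ i : Fin d,
        ((((d : ℝ) * ((w + Hinvsqrt.mulVec (v i)) ⬝ᵥ ℓ)) • Hsqrt.mulVec (v i)) +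
         (((d : ℝ) * ((w + Hinvsqrt.mulVec (-(v i))) ⬝ᵥ ℓ)) • Hsqrt.mulVec (-(v i)))))
      = ℓ := by
  have hdne : (d : ℝ) ≠ 0 := by positivity
  -- orthonormality in matrix form
  have hsum : ∀ j k, (∑ i, v i j * v i k) = if j = k then (1:ℝ) else 0 := by
    intro j k
    set M : Matrix (Fin d) (Fin d) ℝ := Matrix.of v with hM
    have h1 : M * Mᵀ = 1 := by
      ext a b
      simpa [Matrix.mul_apply, Matrix.one_apply, dotProduct, hM] using horth a b
    have h2 : Mᵀ * M = 1 := mul_eq_one_comm.mp h1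
    have := congrFun (congrFun h2 j) k
    simpa [Matrix.mul_apply, Matrix.transpose_apply, Matrix.one_apply, hM,
      mul_comm] using this
  -- simplify each summand
  have hterm : ∀ i : Fin d,
      ((((d : ℝ) * ((w + Hinvsqrt.mulVec (v i)) ⬝ᵥ ℓ)) • Hsqrt.mulVec (v i)) +
       (((d : ℝ) * ((w + Hinvsqrt.mulVec (-(v i))) ⬝ᵥ ℓ)) • Hsqrt.mulVec (-(v i))))
      = (2 * (d : ℝ) * (v i ⬝ᵥ ℓ)) • v i := by
    intro i
    have hs : Real.sqrt (lam i) ≠ 0 := by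
      have := Real.sqrt_pos.mpr (hlam i); linarith
    rw [Matrix.mulVec_neg, Matrix.mulVec_neg, hHsqrt, hHinvsqrt]
    funext j
    simp only [Pi.add_apply, Pi.smul_apply, Pi.neg_apply, smul_eq_mul,
      dotProduct, Pi.smul_apply, smul_eq_mul, Pi.neg_apply]
    have expand : ∀ c : ℝ, (∑ k, (w k + c * v i k) * ℓ k)
        = (∑ k, w k * ℓ k) + c * (∑ k, v i k * ℓ k) := by
      intro c
      rw [Finset.mul_sum, ← Finset.sum_add_distrib]
      congr 1; funext k; ring
    rw [show (fun k => (w k + -((Real.sqrt (lam i))⁻¹ * v i k)) * ℓ k)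
        = (fun k => (w k + (-(Real.sqrt (lam i))⁻¹) * v i k) * ℓ k) by
      funext k; ring]
    rw [expand ((Real.sqrt (lam i))⁻¹), expand (-(Real.sqrt (lam i))⁻¹)]
    field_simp
    ring
  rw [Finset.sum_congr rfl (fun i _ => hterm i)]
  funext j
  simp only [Pi.smul_apply, Finset.sum_apply, Pi.smul_apply, smul_eq_mul,
    dotProduct]
  have step : ∀ i : Fin d, (2 * (d:ℝ) * (∑ k, v i k * ℓ k)) * v i j
      = ∑ k, 2 * (d:ℝ) * (ℓ k * (v i j * v i k)) := by
    intro i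
    rw [Finset.mul_sum, Finset.sum_mul]
    congr 1; funext k; ring
  rw [Finset.sum_congr rfl fun i _ => step i, Finset.sum_comm]
  simp_rw [← Finset.mul_sum, hsum j, mul_ite, mul_one, mul_zero,
    Finset.sum_ite_eq, Finset.mem_univ, if_true]
  field_simp
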